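/- Let b = t^η v ∈ W̃ with η ∈ Q^∨ and v ∈ W, and set ν := A_v η and 𝒯_ν := ν + ker A_v. Suppose that ker A_v ∩ R^∨ ⊆ (I − v)R^∨. Then the W̃-conjugacy class of b is equal to the union over u ∈ W of the sets { t^ξ (u v u⁻¹) : ξ ∈ (u 𝒯_ν) ∩ (η + R^∨) }; that is, the W̃-conjugacy class of b fills out the transverse subspaces. -/
import Mathlib


open scoped RealInnerProductSpace

namespace ADLV

variable {V : Type*} [NormedAddCommGroup V] [InnerProductSpace ℝ V]

/-- The coroot `α^∨ = 2α/(α,α)` of a root `α`. -/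
noncomputable def coroot (α : V) : V := (2 / ⟪α, α⟫) • α

/-- The reflection `s_α : x ↦ x - ⟨α, x⟩ α^∨` in the hyperplane orthogonal to `α`,
as a linear automorphism. -/
noncomputable def sRefl (α : V) (hα : α ≠ 0) : V ≃ₗ[ℝ] V :=
  Module.reflection (f := (innerSL ℝ α : V →ₗ[ℝ] ℝ)) (x := coroot α)
    (by
      have h : ⟪α, α⟫ ≠ 0 := inner_self_ne_zero.mpr hα
      simp [coroot, real_inner_smul_right]
      field_simp)

/-- The averaging operator `A_w = (1/m)(I + w + w² + ⋯ + w^{m-1})`. -/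
noncomputable def avgProj (m : ℕ) (w : V ≃ₗ[ℝ] V) : V →ₗ[ℝ] V :=
  (m : ℝ)⁻¹ • ∑ i ∈ Finset.range m, ((w ^ i : V ≃ₗ[ℝ] V) : V →ₗ[ℝ] V)

/-- The (finite) Weyl group: the group generated by the simple reflections. -/
noncomputable def weylGroup {n : ℕ} (α : Fin n → V) (hα : ∀ j, α j ≠ 0) :
    Subgroup (V ≃ₗ[ℝ] V) :=
  Subgroup.closure (Set.range fun j => sRefl (α j) (hα j))

/-- The coroot lattice `R^∨ = ⊕_j ℤ α_j^∨`. -/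
noncomputable def corootLattice {n : ℕ} (α : Fin n → V) : AddSubgroup V :=
  AddSubgroup.closure (Set.range fun j => coroot (α j))

/-- The coweight lattice `Q^∨ = {x : ⟨α_j, x⟩ ∈ ℤ for all j}`. -/
def coweightLattice {n : ℕ} (α : Fin n → V) : Set V :=
  {x : V | ∀ j, ∃ m : ℤ, ⟪α j, x⟫ = (m : ℝ)}

/-- Elements `t^μ u` of the (extended) affine Weyl group `Q^∨ ⋊ W`, realized inside the
semidirect product `V ⋊ GL(V)` with multiplication `(t^μ u)(t^λ v) = t^{μ + uλ}(uv)`. -/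
@[ext]
structure Aff (V : Type*) [NormedAddCommGroup V] [InnerProductSpace ℝ V] where
  /-- the translation part -/
  t : V
  /-- the linear part -/
  w : V ≃ₗ[ℝ] V

namespace Aff

instance : Mul (Aff V) := ⟨fun a b => ⟨a.t + a.w b.t, a.w * b.w⟩⟩
instance : One (Aff V) := ⟨⟨0, 1⟩⟩
instance : Inv (Aff V) := ⟨fun a => ⟨-(a.w⁻¹ a.t), a.w⁻¹⟩⟩

@[simp] lemma mul_t (a b : Aff V) : (a * b).t = a.t + a.w b.t := rfl
@[simp] lemma mul_w (a b : Aff V) : (a * b).w = a.w * b.w := rfl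
@[simp] lemma one_t : (1 : Aff V).t = 0 := rfl
@[simp] lemma one_w : (1 : Aff V).w = 1 := rfl
@[simp] lemma inv_t (a : Aff V) : (a⁻¹).t = -(a.w⁻¹ a.t) := rfl
@[simp] lemma inv_w (a : Aff V) : (a⁻¹).w = a.w⁻¹ := rfl

lemma mul_apply_w (f g : V ≃ₗ[ℝ] V) (x : V) : (f * g) x = f (g x) := rfl

instance : Group (Aff V) where
  mul_assoc a b c := by
    refine Aff.ext ?_ ?_
    · simp [mul_apply_w, map_add, add_assoc]
    · simp [mul_assoc]
  one_mul a := by refine Aff.ext ?_ ?_ <;> simp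
  mul_one a := by refine Aff.ext ?_ ?_ <;> simp
  inv_mul_cancel a := by
    refine Aff.ext ?_ ?_
    · simp [mul_apply_w]
    · simp

end Aff



section Aux

lemma lmul_apply (f g : V ≃ₗ[ℝ] V) (x : V) : (f * g) x = f (g x) := rfl

lemma inv_apply_apply (u : V ≃ₗ[ℝ] V) (x : V) : u⁻¹ (u x) = x :=
  calc u⁻¹ (u x) = (u⁻¹ * u) x := rfl
    _ = (1 : V ≃ₗ[ℝ] V) x := by rw [inv_mul_cancel]
    _ = x := rfl

lemma apply_inv_apply (u : V ≃ₗ[ℝ] V) (x : V) : u (u⁻¹ x) = x :=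
  calc u (u⁻¹ x) = (u * u⁻¹) x := rfl
    _ = (1 : V ≃ₗ[ℝ] V) x := by rw [mul_inv_cancel]
    _ = x := rfl

lemma sRefl_apply (α : V) (hα : α ≠ 0) (x : V) :
    sRefl α hα x = x - ⟪α, x⟫ • coroot α := by
  rw [sRefl, Module.reflection_apply]
  rfl

lemma sRefl_inv (α : V) (hα : α ≠ 0) : (sRefl α hα)⁻¹ = sRefl α hα := by
  have hinv : sRefl α hα * sRefl α hα = 1 := by
    ext x
    have := Module.involutive_reflection
      (f := (innerSL ℝ α : V →ₗ[ℝ] ℝ)) (x := coroot α)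
      (by
        have h : ⟪α, α⟫ ≠ 0 := inner_self_ne_zero.mpr hα
        simp [coroot, real_inner_smul_right]
        field_simp) x
    simpa [lmul_apply, sRefl] using this
  exact inv_eq_of_mul_eq_one_left hinv

/-- `Q^∨` as an additive subgroup. -/
def QSub {n : ℕ} (α : Fin n → V) : AddSubgroup V where
  carrier := coweightLattice α
  zero_mem' := fun j => ⟨0, by simp⟩
  add_mem' := by
    rintro a b ha hb j
    obtain ⟨p, hp⟩ := ha j
    obtain ⟨q, hq⟩ := hb j
    exact ⟨p + q, by rw [inner_add_right, hp, hq]; push_cast; ring⟩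
  neg_mem' := by
    rintro a ha j
    obtain ⟨p, hp⟩ := ha j
    exact ⟨-p, by rw [inner_neg_right, hp]; push_cast; ring⟩

lemma corootLattice_subset_coweight {n : ℕ} (α : Fin n → V)
    (hcart : ∀ k j, ∃ m : ℤ, ⟪α k, coroot (α j)⟫ = (m : ℝ)) :
    ∀ x ∈ corootLattice α, x ∈ coweightLattice α := by
  intro x hx
  have hle : corootLattice α ≤ QSub α := by
    rw [corootLattice]
    refine (AddSubgroup.closure_le _).mpr ?_
    rintro _ ⟨j, rfl⟩
    exact fun k => hcart k j
  exact hle hx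

lemma weyl_key {n : ℕ} (α : Fin n → V) (hα : ∀ j, α j ≠ 0)
    (hcart : ∀ k j, ∃ m : ℤ, ⟪α k, coroot (α j)⟫ = (m : ℝ)) :
    ∀ w ∈ weylGroup α hα,
      (∀ x ∈ coweightLattice α,
          w x ∈ coweightLattice α ∧ x - w x ∈ corootLattice α) ∧
      (∀ x ∈ coweightLattice α,
          w⁻¹ x ∈ coweightLattice α ∧ x - w⁻¹ x ∈ corootLattice α) := by
  intro w hw
  induction hw using Subgroup.closure_induction with
  | mem s hs =>
    obtain ⟨j, rfl⟩ := hs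
    have key : ∀ x ∈ coweightLattice α,
        sRefl (α j) (hα j) x ∈ coweightLattice α ∧
        x - sRefl (α j) (hα j) x ∈ corootLattice α := by
      intro x hx
      obtain ⟨p, hp⟩ := hx j
      constructor
      · intro k
        obtain ⟨q, hq⟩ := hx k
        obtain ⟨c, hc⟩ := hcart k j
        refine ⟨q - p * c, ?_⟩
        rw [sRefl_apply, inner_sub_right, real_inner_smul_right, hp, hq, hc]
        push_cast; ring
      · have hxe : x - sRefl (α j) (hα j) x = (p : ℝ) • coroot (α j) := by
          rw [sRefl_apply, hp]; abel
        rw [hxe, Int.cast_smul_eq_zsmul]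
        exact AddSubgroup.zsmul_mem _ (AddSubgroup.subset_closure (Set.mem_range_self j)) p
    exact ⟨key, by rw [sRefl_inv]; exact key⟩
  | one =>
    have h1 : ∀ x ∈ coweightLattice α,
        (1 : V ≃ₗ[ℝ] V) x ∈ coweightLattice α ∧
        x - (1 : V ≃ₗ[ℝ] V) x ∈ corootLattice α := by
      intro x hx
      have hx1 : (1 : V ≃ₗ[ℝ] V) x = x := rfl
      rw [hx1, sub_self]
      exact ⟨hx, (corootLattice α).zero_mem⟩
    exact ⟨h1, by rw [inv_one]; exact h1⟩
  | mul a b ha hb iha ihb =>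
    constructor
    · intro x hx
      have hbx := ihb.1 x hx
      have hax := iha.1 (b x) hbx.1
      have hab : (a * b) x = a (b x) := rfl
      rw [hab]
      refine ⟨hax.1, ?_⟩
      have he : x - a (b x) = (x - b x) + (b x - a (b x)) := by abel
      rw [he]
      exact (corootLattice α).add_mem hbx.2 hax.2
    · intro x hx
      have hax := iha.2 x hx
      have hbx := ihb.2 (a⁻¹ x) hax.1
      have hab : (a * b)⁻¹ x = b⁻¹ (a⁻¹ x) := by rw [mul_inv_rev]; rfl
      rw [hab]
      refine ⟨hbx.1, ?_⟩
      have he : x - b⁻¹ (a⁻¹ x) = (x - a⁻¹ x) + (a⁻¹ x - b⁻¹ (a⁻¹ x)) := by abel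
      rw [he]
      exact (corootLattice α).add_mem hax.2 hbx.2
  | inv a ha iha =>
    refine ⟨iha.2, ?_⟩
    rw [inv_inv]
    exact iha.1

lemma avgProj_apply' (m : ℕ) (w : V ≃ₗ[ℝ] V) (x : V) :
    avgProj m w x = (m : ℝ)⁻¹ • ∑ i ∈ Finset.range m, (w ^ i) x := by
  rw [avgProj, LinearMap.smul_apply, LinearMap.sum_apply]
  simp only [LinearEquiv.coe_coe]

lemma avgProj_comp (m : ℕ) (w : V ≃ₗ[ℝ] V) (hw : w ^ m = 1) (x : V) :
    avgProj m w (w x) = avgProj m w x := by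
  rw [avgProj_apply', avgProj_apply']
  congr 1
  have key : ∀ i, (w ^ i) (w x) = (w ^ (i + 1)) x := by
    intro i; rw [pow_succ]; rfl
  have h0 : (w ^ m) x = (w ^ 0) x := by rw [hw, pow_zero]
  have h := Finset.sum_range_succ' (fun i => (w ^ i) x) m
  rw [Finset.sum_range_succ, h0] at h
  calc ∑ i ∈ Finset.range m, (w ^ i) (w x)
      = ∑ i ∈ Finset.range m, (w ^ (i + 1)) x := by
        exact Finset.sum_congr rfl fun i _ => key i
    _ = ∑ i ∈ Finset.range m, (w ^ i) x := (add_right_cancel h).symm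

lemma avgProj_pow (m : ℕ) (w : V ≃ₗ[ℝ] V) (hw : w ^ m = 1) (i : ℕ) (x : V) :
    avgProj m w ((w ^ i) x) = avgProj m w x := by
  induction i generalizing x with
  | zero => rw [pow_zero]; rfl
  | succ i ih =>
    have he : (w ^ (i + 1)) x = (w ^ i) (w x) := by rw [pow_succ]; rfl
    rw [he, ih (w x), avgProj_comp m w hw]

lemma avgProj_idem (m : ℕ) (hm : 1 ≤ m) (w : V ≃ₗ[ℝ] V) (hw : w ^ m = 1) (x : V) :
    avgProj m w (avgProj m w x) = avgProj m w x := by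
  have hmne : (m : ℝ) ≠ 0 := Nat.cast_ne_zero.mpr (by omega)
  rw [avgProj_apply' m w x, map_smul, map_sum]
  rw [Finset.sum_congr rfl fun i _ => avgProj_pow m w hw i x]
  rw [Finset.sum_const, Finset.card_range, ← Nat.cast_smul_eq_nsmul ℝ,
    smul_smul, inv_mul_cancel₀ hmne, one_smul]
  exact avgProj_apply' m w x

lemma conj_eq (μ η : V) (u v : V ≃ₗ[ℝ] V) :
    Aff.mk μ u * Aff.mk η v * (Aff.mk μ u)⁻¹ =
      Aff.mk (μ + u η - u (v (u⁻¹ μ))) (u * v * u⁻¹) := by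
  refine Aff.ext ?_ rfl
  show (μ + u η) + (u * v) (-(u⁻¹ μ)) = μ + u η - u (v (u⁻¹ μ))
  rw [lmul_apply, map_neg, map_neg]
  abel

end Aux

/-- Let `b = t^η v ∈ W̃` with `η ∈ Q^∨` and `v ∈ W`; set `ν := A_v η` and
`𝒯_ν := ν + ker A_v`.  Suppose that `ker A_v ∩ R^∨ ⊆ (I - v) R^∨`.  Then the
`W̃`-conjugacy class of `b` is equal to the union over `u ∈ W` of the sets
`{ t^ξ (u v u⁻¹) : ξ ∈ (u 𝒯_ν) ∩ (η + R^∨) }`; that is, the `W̃`-conjugacy class of `b`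
fills out the transverse subspaces. -/
theorem conjugacy_class_fills_out_transverse_subspaces {n : ℕ}
    (α : Fin n → V) (hα : ∀ j, α j ≠ 0)
    (hlin : LinearIndependent ℝ α)
    -- crystallographic: the Cartan integers `⟨α_k, α_j^∨⟩` are integers
    (hcart : ∀ k j, ∃ m : ℤ, ⟪α k, coroot (α j)⟫ = (m : ℝ))
    (η : V) (hη : η ∈ coweightLattice α)
    (v : V ≃ₗ[ℝ] V) (hvW : v ∈ weylGroup α hα)
    (m : ℕ) (hm : 1 ≤ m) (hord : orderOf v = m)
    -- the hypothesis `ker A_v ∩ R^∨ ⊆ (I - v) R^∨`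
    (hcond : ∀ x ∈ LinearMap.ker (avgProj m v), x ∈ corootLattice α →
        ∃ r ∈ corootLattice α, x = r - v r) :
    {z : Aff V | ∃ μ ∈ coweightLattice α, ∃ u ∈ weylGroup α hα,
        z = Aff.mk μ u * Aff.mk η v * (Aff.mk μ u)⁻¹}
      = ⋃ u ∈ (weylGroup α hα : Set (V ≃ₗ[ℝ] V)),
          {z : Aff V | ∃ ξ,
            ξ ∈ ⇑u '' {x : V | x - avgProj m v η ∈ LinearMap.ker (avgProj m v)} ∧
            ξ - η ∈ corootLattice α ∧
            z = Aff.mk ξ (u * v * u⁻¹)} := by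

  have hvm : v ^ m = 1 := by rw [← hord]; exact pow_orderOf_eq_one v
  have key := weyl_key α hα hcart
  have hRQ := corootLattice_subset_coweight α hcart
  ext z
  simp only [Set.mem_setOf_eq, Set.mem_iUnion, SetLike.mem_coe, exists_prop]
  constructor
  · rintro ⟨μ, hμ, u, hu, rfl⟩
    refine ⟨u, hu, μ + u η - u (v (u⁻¹ μ)), ?_, ?_, conj_eq μ η u v⟩
    · refine ⟨u⁻¹ μ + η - v (u⁻¹ μ), ?_, ?_⟩
      · simp only [Set.mem_setOf_eq, LinearMap.mem_ker]
        rw [map_sub, map_sub, map_add,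
          avgProj_comp m v hvm (u⁻¹ μ), avgProj_idem m hm v hvm]
        abel
      · rw [map_sub, map_add, apply_inv_apply]
    · have hw' : u * v * u⁻¹ ∈ weylGroup α hα :=
        mul_mem (mul_mem hu hvW) (inv_mem hu)
      have h1 := ((key _ hw').1 μ hμ).2
      have h2 := ((key u hu).1 η hη).2
      have he : μ + u η - u (v (u⁻¹ μ)) - η
          = (μ - (u * v * u⁻¹) μ) + -(η - u η) := by
        have hr : u (v (u⁻¹ μ)) = (u * v * u⁻¹) μ := rfl
        rw [hr]; abel
      rw [he]
      exact (corootLattice α).add_mem h1 ((corootLattice α).neg_mem h2)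
  · rintro ⟨u, hu, ξ, ⟨x, hx, rfl⟩, hξη, rfl⟩
    have hAx : avgProj m v x = avgProj m v η := by
      have h1 : avgProj m v (x - avgProj m v η) = 0 := LinearMap.mem_ker.mp hx
      rw [map_sub, avgProj_idem m hm v hvm, sub_eq_zero] at h1
      exact h1
    have hξQ : u x ∈ coweightLattice α := by
      have h1 : u x = η + (u x - η) := by abel
      rw [h1]
      exact (QSub α).add_mem hη (hRQ _ hξη)
    have hyker : x - η ∈ LinearMap.ker (avgProj m v) := by
      rw [LinearMap.mem_ker, map_sub, hAx, sub_self]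
    have hyR : x - η ∈ corootLattice α := by
      have h2 := ((key u hu).2 (u x) hξQ).2
      rw [inv_apply_apply] at h2
      have he : x - η = -(u x - x) + (u x - η) := by abel
      rw [he]
      exact (corootLattice α).add_mem ((corootLattice α).neg_mem h2) hξη
    obtain ⟨r, hrR, hr⟩ := hcond _ hyker hyR
    refine ⟨u r, ((key u hu).1 r (hRQ r hrR)).1, u, hu, ?_⟩
    rw [conj_eq]
    have he : u r + u η - u (v r) = u (r + η - v r) := by
      rw [map_sub, map_add]
    have hxeq : r + η - v r = x := by
      have h1 : r + η - v r = η + (r - v r) := by abel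
      rw [h1, ← hr]; abel
    refine Aff.ext ?_ rfl
    rw [inv_apply_apply, he, hxeq]


end ADLV
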